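/- Conditional unbiasedness of CBPS under a linear outcome model: suppose the CBPS balancing condition ∑_{T_i=0} r_i X_i = ∑_{T_i=1} X_i holds, where r_i = π̂(X_i)/(1−π̂(X_i)) are functions of the covariates and treatments only, and suppose m0 is linear (m0(x) = aᵀx). Under ignorability, conditional on {(X_i, T_i)}, the expectation of (1/n1)∑_{T_i=1} Y_i − (1/n1)∑_{T_i=0} r_i Y_i equals (1/n1)∑_{T_i=1}(m1(X_i) − m0(X_i)), i.e., the sample ATT. -/

import Mathlib

open Finset MeasureTheory

/-- Conditional unbiasedness of CBPS under a linear outcome model: conditioning on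
the covariates and treatments (so that they and the odds weights `r_i` are fixed),
if the CBPS balancing condition holds and `m0(x) = aᵀx`, then the expectation of the
weighted estimator equals the sample ATT. -/
theorem stmt_13 {Ω : Type*} [MeasurableSpace Ω] (μ : Measure Ω) [IsProbabilityMeasure μ]
    {n d : ℕ} (T : Fin n → Bool) (X : Fin n → (Fin d → ℝ))
    (Y : Fin n → Ω → ℝ) (m0 m1 : (Fin d → ℝ) → ℝ) (r : Fin n → ℝ) (a : Fin d → ℝ)
    (n1 : ℕ) (hn1 : n1 = (univ.filter (fun i => T i = true)).card) (hn1pos : 0 < n1)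
    (hYint : ∀ i, Integrable (Y i) μ)
    (hmean : ∀ i, ∫ ω, Y i ω ∂μ = if T i = true then m1 (X i) else m0 (X i))
    (hm0lin : ∀ x, m0 x = ∑ j, a j * x j)
    (hbal : ∀ j, ∑ i ∈ univ.filter (fun i => T i = false), r i * X i j
      = ∑ i ∈ univ.filter (fun i => T i = true), X i j) :
    ∫ ω, ((1 / (n1 : ℝ)) * ∑ i ∈ univ.filter (fun i => T i = true), Y i ω
        - (1 / (n1 : ℝ)) * ∑ i ∈ univ.filter (fun i => T i = false), r i * Y i ω) ∂μ
      = (1 / (n1 : ℝ)) * ∑ i ∈ univ.filter (fun i => T i = true), (m1 (X i) - m0 (X i)) := by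
  have hint1 : Integrable (fun ω => (1 / (n1 : ℝ)) * ∑ i ∈ univ.filter (fun i => T i = true), Y i ω) μ :=
    (integrable_finset_sum _ (fun i _ => hYint i)).const_mul _
  have hint2 : Integrable (fun ω => (1 / (n1 : ℝ)) * ∑ i ∈ univ.filter (fun i => T i = false), r i * Y i ω) μ :=
    (integrable_finset_sum _ (fun i _ => (hYint i).const_mul _)).const_mul _
  rw [integral_sub hint1 hint2, MeasureTheory.integral_const_mul, MeasureTheory.integral_const_mul,
    integral_finset_sum _ (fun i _ => hYint i),
    integral_finset_sum _ (fun i _ => (hYint i).const_mul _)]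
  have h1 : ∑ i ∈ univ.filter (fun i => T i = true), ∫ ω, Y i ω ∂μ
      = ∑ i ∈ univ.filter (fun i => T i = true), m1 (X i) := by
    apply Finset.sum_congr rfl
    intro i hi
    rw [hmean i, if_pos (Finset.mem_filter.mp hi).2]
  have h2 : ∑ i ∈ univ.filter (fun i => T i = false), ∫ ω, r i * Y i ω ∂μ
      = ∑ i ∈ univ.filter (fun i => T i = false), r i * m0 (X i) := by
    apply Finset.sum_congr rfl
    intro i hi
    rw [MeasureTheory.integral_const_mul, hmean i, if_neg (by simp [(Finset.mem_filter.mp hi).2])]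
  have h3 : ∑ i ∈ univ.filter (fun i => T i = false), r i * m0 (X i)
      = ∑ i ∈ univ.filter (fun i => T i = true), m0 (X i) := by
    simp only [hm0lin, Finset.mul_sum]
    rw [Finset.sum_comm, Finset.sum_comm (s := univ.filter (fun i => T i = true))]
    apply Finset.sum_congr rfl
    intro j _
    calc ∑ i ∈ univ.filter (fun i => T i = false), r i * (a j * X i j)
        = a j * ∑ i ∈ univ.filter (fun i => T i = false), r i * X i j := by
          rw [Finset.mul_sum]; apply Finset.sum_congr rfl; intros; ring
      _ = ∑ i ∈ univ.filter (fun i => T i = true), a j * X i j := by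
          rw [hbal j, Finset.mul_sum]
  rw [h1, h2, h3, ← mul_sub, ← Finset.sum_sub_distrib]
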